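/- Let the digit sequence z be periodic with period p, let D ∈ ℂ be the displacement of the path over one period, and let t be the net turn over one period modulo 6. If t ≡ 0 (mod 6) and D ≠ 0, then the path is unbounded: the position after kp steps equals k·D, so its distance from the start tends to infinity. -/

import Mathlib

open Finset

noncomputable def ω : ℂ := Complex.exp (Real.pi * Complex.I / 3)

def dir (d0 : ℤ) (z : ℕ → Fin 2) : ℕ → ℤ
  | 0 => d0
  | n + 1 => dir d0 z n + (if z n = 0 then 1 else -1)

noncomputable def pos (d0 : ℤ) (z : ℕ → Fin 2) : ℕ → ℂ
  | 0 => 0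
  | n + 1 => pos d0 z n + ω ^ dir d0 z (n + 1)

lemma omega_ne_zero : ω ≠ 0 := Complex.exp_ne_zero _

lemma omega_pow_six : ω ^ (6 : ℕ) = 1 := by
  rw [ω, ← Complex.exp_nat_mul]
  have : ((6 : ℕ) : ℂ) * (Real.pi * Complex.I / 3) = 2 * Real.pi * Complex.I := by
    push_cast; ring
  rw [this, Complex.exp_two_pi_mul_I]

lemma dir_eq (d0 : ℤ) (z : ℕ → Fin 2) (n : ℕ) :
    dir d0 z n = d0 + ∑ j ∈ Finset.range n, (if z j = 0 then (1 : ℤ) else -1) := by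
  induction n with
  | zero => simp [dir]
  | succ n ih => rw [dir, ih, Finset.sum_range_succ]; ring

lemma fin2_ne_zero_iff (a : Fin 2) : ¬ a = 0 ↔ a = 1 := by
  fin_cases a <;> simp

theorem periodic_zero_turn_unbounded (d0 : ℤ) (z : ℕ → Fin 2) (p : ℕ) (hp : 0 < p)
    (hper : ∀ j, z (j + p) = z j)
    (t : ℤ)
    (ht : t = (((Finset.range p).filter (fun j => z j = 0)).card : ℤ)
            - (((Finset.range p).filter (fun j => z j = 1)).card : ℤ))
    (hdvd : (6 : ℤ) ∣ t)
    (D : ℂ) (hD : D = pos d0 z p) (hD0 : D ≠ 0) :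
    (∀ k : ℕ, pos d0 z (k * p) = (k : ℂ) * D) ∧
    Filter.Tendsto (fun k : ℕ => ‖pos d0 z (k * p)‖) Filter.atTop Filter.atTop := by
  -- ω ^ t = 1
  have hωt : ω ^ t = 1 := by
    obtain ⟨m, rfl⟩ := hdvd
    rw [zpow_mul, show ((6 : ℤ)) = ((6 : ℕ) : ℤ) by norm_num, zpow_natCast, omega_pow_six,
      one_zpow]
  -- sum of steps over one period equals t
  have hsum : ∑ j ∈ Finset.range p, (if z j = 0 then (1 : ℤ) else -1) = t := by
    rw [Finset.sum_ite, Finset.sum_const, Finset.sum_const]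
    have : Finset.filter (fun j => ¬ z j = 0) (Finset.range p)
        = Finset.filter (fun j => z j = 1) (Finset.range p) := by
      apply Finset.filter_congr
      intro x _
      simpa using fin2_ne_zero_iff (z x)
    rw [this, ht]
    push_cast
    ring
  -- dir shifts by t over a period
  have hdirp : ∀ n, dir d0 z (n + p) = dir d0 z n + t := by
    intro n
    induction n with
    | zero => simp [dir, dir_eq, hsum]
    | succ n ih =>
      have : n + 1 + p = (n + p) + 1 := by ring
      rw [this, dir, ih, hper, dir]
      ring
  have hωdir : ∀ n, ω ^ dir d0 z (n + p) = ω ^ dir d0 z n := by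
    intro n
    rw [hdirp n, zpow_add₀ omega_ne_zero, hωt, mul_one]
  -- pos shifts by D over a period
  have hposp : ∀ n, pos d0 z (n + p) = pos d0 z n + D := by
    intro n
    induction n with
    | zero => simp [pos, hD]
    | succ n ih =>
      have h1 : n + 1 + p = (n + p) + 1 := by ring
      rw [h1, pos, ih, show n + p + 1 = (n + 1) + p by ring, hωdir, pos]
      ring
  have hmain : ∀ k : ℕ, pos d0 z (k * p) = (k : ℂ) * D := by
    intro k
    induction k with
    | zero => simp [pos]
    | succ k ih =>
      rw [show (k + 1) * p = k * p + p by ring, hposp, ih]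
      push_cast
      ring
  refine ⟨hmain, ?_⟩
  have : (fun k : ℕ => ‖pos d0 z (k * p)‖)
      = fun k : ℕ => (k : ℝ) * ‖D‖ := by
    funext k
    rw [hmain k, norm_mul, Complex.norm_natCast]
  rw [this]
  exact Filter.Tendsto.atTop_mul_const (norm_pos_iff.mpr hD0) tendsto_natCast_atTop_atTop
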